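/- Let f : ℝ^n → ℝ be convex differentiable with ‖∇f(x)‖ ≤ G for all x, and ‖x₀ - x*‖ ≤ D where x* is a minimizer of f. With updates x_{t+1} = x_t - η∇f(x_t) and η = D/(G√T), the average iterate x̂ = (1/T)Σ_{t=0}^{T-1} x_t satisfies f(x̂) - f(x*) ≤ DG/√T. -/

import Mathlib

open RealInnerProductSpace Finset

/-- Gradient inequality for a convex differentiable function. -/
lemma grad_convex_ineq {E : Type*} [NormedAddCommGroup E] [InnerProductSpace ℝ E] [CompleteSpace E]
    {f : E → ℝ} (hconv : ConvexOn ℝ Set.univ f) {x g : E}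
    (h : HasGradientAt f g x) (y : E) :
    f x + ⟪g, y - x⟫ ≤ f y := by
  set A : ℝ →ᵃ[ℝ] E := AffineMap.lineMap x y with hA
  have hAt : ∀ t : ℝ, A t = x + t • (y - x) := by
    intro t; simp [hA, AffineMap.lineMap_apply]; abel
  have hgconv : ConvexOn ℝ Set.univ (f ∘ A) := by
    have := hconv.comp_affineMap A
    simpa using this
  have hderiv : HasDerivAt (f ∘ A) ⟪g, y - x⟫ 0 := by
    have h1 : HasDerivAt A (y - x) 0 := by
      rw [show (A : ℝ → E) = fun t : ℝ => x + t • (y - x) from funext hAt]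
      simpa using ((hasDerivAt_id (0:ℝ)).smul_const (y - x)).const_add x
    have hA0 : A 0 = x := by simp [hAt]
    have hf : HasFDerivAt f (InnerProductSpace.toDual ℝ E g) (A 0) := by
      rw [hA0]; exact h.hasFDerivAt
    have h2 := hf.comp_hasDerivAt 0 h1
    simpa [InnerProductSpace.toDual_apply_apply, Function.comp] using h2
  have hslope := hgconv.le_slope_of_hasDerivAt (Set.mem_univ (0:ℝ)) (Set.mem_univ (1:ℝ))
    one_pos hderiv
  have : slope (f ∘ A) 0 1 = f y - f x := by
    simp [slope_def_field, hAt 1, hAt 0, Function.comp]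
  rw [this] at hslope
  linarith

/-- Offline gradient descent: convergence of the average iterate for Lipschitz convex `f`. -/
theorem gradient_descent_average_iterate {n : ℕ} (T : ℕ) (hT : 0 < T)
    (f : EuclideanSpace ℝ (Fin n) → ℝ)
    (f' : EuclideanSpace ℝ (Fin n) → EuclideanSpace ℝ (Fin n))
    (hconv : ConvexOn ℝ Set.univ f)
    (hdiff : ∀ x, HasGradientAt f (f' x) x)
    (G D : ℝ) (hG : 0 < G) (hD : 0 < D)
    (hGbound : ∀ x, ‖f' x‖ ≤ G)
    (xstar : EuclideanSpace ℝ (Fin n)) (hmin : ∀ y, f xstar ≤ f y)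
    (x : ℕ → EuclideanSpace ℝ (Fin n)) (hx0 : ‖x 0 - xstar‖ ≤ D)
    (η : ℝ) (hη : η = D / (G * Real.sqrt T))
    (hupdate : ∀ t, x (t + 1) = x t - η • f' (x t)) :
    f ((1 / T : ℝ) • ∑ t ∈ range T, x t) - f xstar ≤ D * G / Real.sqrt T := by
  set s := Real.sqrt T with hs
  have hspos : 0 < s := Real.sqrt_pos.mpr (by exact_mod_cast hT)
  have hs2 : s ^ 2 = (T : ℝ) := Real.sq_sqrt (by positivity)
  have hηpos : 0 < η := by rw [hη]; positivity
  set R : ℕ → ℝ := fun t => ‖x t - xstar‖ ^ 2 with hR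
  -- per-step estimate
  have step : ∀ t, f (x t) - f xstar ≤ (R t - R (t + 1)) / (2 * η) + η * G ^ 2 / 2 := by
    intro t
    have hgrad := grad_convex_ineq hconv (hdiff (x t)) xstar
    have hinner : f (x t) - f xstar ≤ ⟪f' (x t), x t - xstar⟫ := by
      have : ⟪f' (x t), xstar - x t⟫ = -⟪f' (x t), x t - xstar⟫ := by
        rw [← inner_neg_right]; congr 1; abel
      rw [this] at hgrad; linarith
    have hexp : R (t + 1) = R t - 2 * η * ⟪f' (x t), x t - xstar⟫ + η ^ 2 * ‖f' (x t)‖ ^ 2 := by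
      have h1 : x (t + 1) - xstar = (x t - xstar) - η • f' (x t) := by
        rw [hupdate t]; abel
      have h2 : ‖(x t - xstar) - η • f' (x t)‖ ^ 2
          = ‖x t - xstar‖ ^ 2 - 2 * ⟪x t - xstar, η • f' (x t)⟫ + ‖η • f' (x t)‖ ^ 2 :=
        norm_sub_sq_real _ _
      have h3 : ⟪x t - xstar, η • f' (x t)⟫ = η * ⟪f' (x t), x t - xstar⟫ := by
        rw [real_inner_smul_right, real_inner_comm]
      have h4 : ‖η • f' (x t)‖ ^ 2 = η ^ 2 * ‖f' (x t)‖ ^ 2 := by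
        rw [norm_smul]; simp [mul_pow, abs_sq]
      simp only [hR, h1, h2, h3, h4]; ring
    have hGb : ‖f' (x t)‖ ^ 2 ≤ G ^ 2 := by
      have := hGbound (x t)
      nlinarith [norm_nonneg (f' (x t))]
    have : ⟪f' (x t), x t - xstar⟫ = (R t - R (t + 1)) / (2 * η) + η * ‖f' (x t)‖ ^ 2 / 2 := by
      rw [hexp]; field_simp; ring
    rw [this] at hinner
    nlinarith
  -- sum the per-step estimates
  have hsum : ∑ t ∈ range T, (f (x t) - f xstar) ≤ D * G * s := by
    have htel : ∑ t ∈ range T, ((R t - R (t + 1)) / (2 * η) + η * G ^ 2 / 2)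
        = (R 0 - R T) / (2 * η) + T * (η * G ^ 2 / 2) := by
      rw [Finset.sum_add_distrib, Finset.sum_const, ← Finset.sum_div,
        Finset.sum_range_sub' R]
      simp [mul_comm]
    have h1 : ∑ t ∈ range T, (f (x t) - f xstar)
        ≤ (R 0 - R T) / (2 * η) + T * (η * G ^ 2 / 2) := by
      rw [← htel]; exact Finset.sum_le_sum fun t _ => step t
    have hR0 : R 0 ≤ D ^ 2 := by
      simp only [hR]
      have := norm_nonneg (x 0 - xstar)
      nlinarith
    have hRT : 0 ≤ R T := by positivity
    have hval : D ^ 2 / (2 * η) + T * (η * G ^ 2 / 2) = D * G * s := by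
      rw [hη, ← hs2]; field_simp; ring
    have h2 : (R 0 - R T) / (2 * η) ≤ D ^ 2 / (2 * η) := by
      apply div_le_div_of_nonneg_right _ (by positivity)
      · linarith
    linarith
  -- Jensen
  have hjensen : f ((1 / T : ℝ) • ∑ t ∈ range T, x t) ≤ ∑ t ∈ range T, (1 / T : ℝ) * f (x t) := by
    have hTpos : (0:ℝ) < T := by exact_mod_cast hT
    have := hconv.map_sum_le (t := range T) (w := fun _ => (1 / T : ℝ)) (p := x)
      (fun i _ => by positivity)
      (by rw [Finset.sum_const]; simp; field_simp)
      (fun i _ => Set.mem_univ _)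
    rwa [← Finset.smul_sum] at this
  have hTpos : (0:ℝ) < T := by exact_mod_cast hT
  have hfinal : ∑ t ∈ range T, (1 / T : ℝ) * f (x t) - f xstar
      = (1 / T : ℝ) * ∑ t ∈ range T, (f (x t) - f xstar) := by
    rw [Finset.mul_sum]
    simp only [mul_sub]
    rw [Finset.sum_sub_distrib, Finset.sum_const]
    simp only [nsmul_eq_mul]
    field_simp
    simp only [Finset.card_range]; ring
  have key : (1 / (T:ℝ)) * (D * G * s) = D * G / s := by
    rw [← hs2]; field_simp
  have hbound : (1 / T : ℝ) * ∑ t ∈ range T, (f (x t) - f xstar) ≤ D * G / s :=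
    key ▸ mul_le_mul_of_nonneg_left hsum (by positivity)
  linarith [hjensen]
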